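/- arXiv:1309.4072 — 2 statements merged into one kernel-verified Lean document; each statement's English description precedes it below -/
import Mathlib

section
/- Let c₀ > 0, let (z_n)_{n≥1} be a sequence of real numbers with z_n ≥ c₀ n for all n ≥ 1, let (g_n)_{n≥1} be independent standard complex Gaussian random variables, and fix 0 ≤ s < 1/2. Then there exist constants c > 0 and C > 0 (depending only on c₀ and s) such that for every integer N₀ ≥ 2 and every λ > 0, P({ N₀^{1/2 − s} (∑_{n ≥ N₀} |g_n|² / z_n^{2(1−s)})^{1/2} > λ }) ≤ C exp(−λ^c). -/
open MeasureTheory ProbabilityTheory Real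

open scoped ENNReal NNReal

/-- A standard complex Gaussian random variable: `g = X + iY` with `X, Y` independent
real centered Gaussians of variance `1/2` (so that `E|g|² = 1`). -/
def IsStdComplexGaussian {Ω : Type*} [MeasurableSpace Ω] (μ : Measure Ω) (g : Ω → ℂ) :
    Prop :=
  Measurable g ∧
    Measure.map (fun ω => (g ω).re) μ = gaussianReal 0 (1 / 2) ∧
    Measure.map (fun ω => (g ω).im) μ = gaussianReal 0 (1 / 2) ∧
    IndepFun (fun ω => (g ω).re) (fun ω => (g ω).im) μ

lemma gauss_pdf_half (x : ℝ) :
    gaussianPDFReal 0 (1/2) x = (Real.sqrt π)⁻¹ * rexp (-x ^ 2) := by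
  rw [gaussianPDFReal]
  norm_num
  rw [mul_comm (√2) _, mul_assoc, inv_mul_cancel₀ (by positivity : (√2:ℝ) ≠ 0), mul_one]

lemma gauss_exp_sq_integral {u : ℝ} (hu : u < 1) :
    Integrable (fun x => rexp (u * x ^ 2)) (gaussianReal 0 (1/2)) ∧
      ∫ x, rexp (u * x ^ 2) ∂(gaussianReal 0 (1/2)) = (Real.sqrt (1 - u))⁻¹ := by
  have h1u : 0 < 1 - u := by linarith
  have hmeas : Measurable fun x : ℝ => rexp (u * x ^ 2) :=
    ((measurable_id.pow_const 2).const_mul u).exp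
  have hgr : gaussianReal 0 (1/2) =
      volume.withDensity fun x => ((gaussianPDFReal 0 (1/2) x).toNNReal : ℝ≥0∞) := by
    rw [gaussianReal_of_var_ne_zero _ (by norm_num)]
    rfl
  have hfm : Measurable fun x => (gaussianPDFReal 0 (1/2) x).toNNReal :=
    (measurable_gaussianPDFReal 0 (1/2)).real_toNNReal
  have hkey : ∀ x : ℝ, (gaussianPDFReal 0 (1/2) x).toNNReal • rexp (u * x ^ 2)
      = (Real.sqrt π)⁻¹ * rexp (-(1 - u) * x ^ 2) := by
    intro x
    have hnn : 0 ≤ gaussianPDFReal 0 (1/2) x := gaussianPDFReal_nonneg _ _ _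
    rw [NNReal.smul_def, smul_eq_mul, Real.coe_toNNReal _ hnn, gauss_pdf_half,
      mul_assoc, ← Real.exp_add]
    ring_nf
  have hint : Integrable (fun x => (Real.sqrt π)⁻¹ * rexp (-(1 - u) * x ^ 2)) volume :=
    (integrable_exp_neg_mul_sq h1u).const_mul _
  constructor
  · rw [hgr, integrable_withDensity_iff_integrable_smul hfm]
    exact hint.congr (Filter.Eventually.of_forall fun x => (hkey x).symm)
  · rw [hgr, integral_withDensity_eq_integral_smul hfm]
    simp_rw [hkey]
    rw [integral_const_mul, integral_gaussian, Real.sqrt_div Real.pi_nonneg]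
    rw [div_eq_mul_inv, ← mul_assoc, inv_mul_cancel₀ (by positivity : (√π:ℝ) ≠ 0), one_mul]

lemma tail_step {q : ℝ} (hq0 : 0 < q) (hq1 : q ≤ 1) {n : ℕ} (hn : 1 ≤ n) :
    (((n : ℝ)) ^ (1 + q))⁻¹ ≤ (4 / q) * ((((n : ℝ)) ^ q)⁻¹ - ((((n : ℝ) + 1)) ^ q)⁻¹) := by
  have hn1 : (1 : ℝ) ≤ (n : ℝ) := by exact_mod_cast hn
  have hnpos : (0 : ℝ) < (n : ℝ) := by linarith
  set A : ℝ := (n : ℝ) + 1 with hA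
  have hApos : (0 : ℝ) < A := by positivity
  set y : ℝ := A⁻¹ with hy
  have hypos : 0 < y := by positivity
  have hy1 : y ≤ 1 / 2 := by
    rw [hy]
    rw [inv_le_comm₀ hApos (by norm_num)]
    rw [hA]; norm_num; linarith
  set B : ℝ := (n : ℝ) ^ q with hB
  set C : ℝ := A ^ q with hC
  have hBpos : 0 < B := Real.rpow_pos_of_pos hnpos _
  have hCpos : 0 < C := Real.rpow_pos_of_pos hApos _
  -- Bernoulli
  have hber : (1 - y) ^ q ≤ 1 - q * y := by
    have := rpow_one_add_le_one_add_mul_self (s := -y) (by linarith) hq0.le hq1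
    rw [← sub_eq_add_neg, mul_neg, ← sub_eq_add_neg] at this
    exact this
  have h1y : 1 - y = (n : ℝ) / A := by
    rw [hy, hA]; field_simp; ring
  have hBC : (1 - y) ^ q = B / C := by
    rw [h1y, Real.div_rpow hnpos.le hApos.le]
  have hBer' : B ≤ C * (1 - q * y) := by
    have h := hber
    rw [hBC, div_le_iff₀ hCpos] at h
    linarith [h]
  have hqy : 0 ≤ q * y := by positivity
  have h1 : B * (1 + q * y) ≤ C := by
    nlinarith [mul_le_mul_of_nonneg_right hBer' (show (0:ℝ) ≤ 1 + q * y by linarith),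
      mul_nonneg hCpos.le (sq_nonneg (q * y))]
  -- conclude
  have expand : B⁻¹ - C⁻¹ - q * y / C = (C - B * (1 + q * y)) / (B * C) := by
    field_simp
    ring
  have h2 : q * y / C ≤ B⁻¹ - C⁻¹ := by
    have h3 : (0:ℝ) ≤ (C - B * (1 + q * y)) / (B * C) :=
      div_nonneg (by linarith) (by positivity)
    linarith [expand ▸ h3]
  -- rewrite goal
  have hA1q : A ^ (1 + q) = A * C := by
    rw [hC, Real.rpow_add hApos, Real.rpow_one]
  have hgoal1 : ((n : ℝ) ^ (1 + q))⁻¹ ≤ (A ^ (1 + q))⁻¹ * 4 := by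
    have hmono : (n : ℝ) ^ (1 + q) ≤ A ^ (1 + q) :=
      Real.rpow_le_rpow hnpos.le (by rw [hA]; linarith) (by linarith)
    have hA2 : A ^ (1 + q) ≤ (2 * (n : ℝ)) ^ (1 + q) :=
      Real.rpow_le_rpow hApos.le (by rw [hA]; linarith) (by linarith)
    have h2n : (2 * (n : ℝ)) ^ (1 + q) = 2 ^ (1 + q) * (n : ℝ) ^ (1 + q) :=
      Real.mul_rpow (by norm_num) hnpos.le
    have h24 : (2 : ℝ) ^ (1 + q) ≤ 4 := by
      calc (2:ℝ) ^ (1+q) ≤ 2 ^ (2:ℝ) :=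
        Real.rpow_le_rpow_of_exponent_le (by norm_num) (by linarith)
      _ = 4 := by
        rw [show (2:ℝ) = ((2:ℕ):ℝ) by norm_num, Real.rpow_natCast]; norm_num
    have hle : A ^ (1 + q) ≤ 4 * (n : ℝ) ^ (1 + q) := by
      calc A ^ (1+q) ≤ 2 ^ (1+q) * (n : ℝ) ^ (1+q) := by rw [← h2n]; exact hA2
        _ ≤ 4 * (n : ℝ) ^ (1+q) :=
          mul_le_mul_of_nonneg_right h24 (Real.rpow_nonneg hnpos.le _)
    have hnp : (0:ℝ) < (n : ℝ) ^ (1 + q) := Real.rpow_pos_of_pos hnpos _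
    have hAp : (0:ℝ) < A ^ (1 + q) := Real.rpow_pos_of_pos hApos _
    rw [← sub_nonneg]
    have : (A ^ (1 + q))⁻¹ * 4 - ((n : ℝ) ^ (1 + q))⁻¹
        = (4 * (n : ℝ) ^ (1+q) - A ^ (1+q)) / ((n : ℝ) ^ (1+q) * A ^ (1+q)) := by
      rw [eq_div_iff (by positivity : ((n : ℝ) ^ (1+q) * A ^ (1+q)) ≠ 0)]
      have e1 : (A ^ (1+q))⁻¹ * (A ^ (1+q)) = 1 := inv_mul_cancel₀ hAp.ne'
      have e2 : (((n:ℝ)) ^ (1+q))⁻¹ * (((n:ℝ)) ^ (1+q)) = 1 := inv_mul_cancel₀ hnp.ne'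
      linear_combination (4 * ((n:ℝ)) ^ (1+q)) * e1 - (A ^ (1+q)) * e2
    rw [this]
    exact div_nonneg (by linarith) (by positivity)
  have hqyC : q * y / C = q * (A ^ (1 + q))⁻¹ := by
    rw [hA1q, hy, mul_inv]
    ring
  calc ((n : ℝ) ^ (1 + q))⁻¹ ≤ (A ^ (1 + q))⁻¹ * 4 := hgoal1
    _ = (4 / q) * (q * (A ^ (1 + q))⁻¹) := by
        rw [mul_comm ((A ^ (1 + q))⁻¹) 4, mul_comm q ((A ^ (1 + q))⁻¹),
          div_mul_eq_mul_div, mul_div_assoc, mul_div_assoc, div_self hq0.ne', mul_one]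
    _ ≤ (4 / q) * (B⁻¹ - C⁻¹) := by
        refine mul_le_mul_of_nonneg_left ?_ (by positivity)
        rw [← hqyC]
        exact h2

lemma tail_sum {q : ℝ} (hq0 : 0 < q) (hq1 : q ≤ 1) {N₀ : ℕ} (hN : 1 ≤ N₀) (M : ℕ) :
    ∑ n ∈ Finset.Ico N₀ M, (((n : ℝ)) ^ (1 + q))⁻¹ ≤ (4 / q) * (((N₀ : ℝ)) ^ q)⁻¹ := by
  set f : ℕ → ℝ := fun n => (((n : ℝ)) ^ q)⁻¹ with hf
  have hfnn : ∀ n, 0 ≤ f n := fun n => by positivity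
  have tel : ∀ K, ∑ n ∈ Finset.range K, (f n - f (n + 1)) = f 0 - f K := by
    intro K
    induction K with
    | zero => simp
    | succ k ih => rw [Finset.sum_range_succ, ih]; ring
  have hIco : ∑ n ∈ Finset.Ico N₀ M, (f n - f (n + 1)) ≤ f N₀ := by
    rcases le_or_gt N₀ M with h | h
    · rw [Finset.sum_Ico_eq_sub _ h, tel, tel]
      linarith [hfnn M]
    · rw [Finset.Ico_eq_empty (by omega)]
      simpa using hfnn N₀
  calc ∑ n ∈ Finset.Ico N₀ M, (((n : ℝ)) ^ (1 + q))⁻¹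
      ≤ ∑ n ∈ Finset.Ico N₀ M, (4 / q) * (f n - f (n + 1)) := by
        refine Finset.sum_le_sum fun n hn => ?_
        have hn1 : 1 ≤ n := le_trans hN (Finset.mem_Ico.mp hn).1
        have := tail_step hq0 hq1 hn1
        simpa [hf, Nat.cast_add, Nat.cast_one] using this
    _ = (4 / q) * ∑ n ∈ Finset.Ico N₀ M, (f n - f (n + 1)) := by rw [Finset.mul_sum]
    _ ≤ (4 / q) * f N₀ := mul_le_mul_of_nonneg_left hIco (by positivity)

lemma complex_gauss_exp_moment {Ω : Type*} [MeasurableSpace Ω] {μ : Measure Ω}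
    {g : Ω → ℂ} (hg : IsStdComplexGaussian μ g) {u : ℝ} (hu0 : 0 ≤ u) (hu : u < 1) :
    Integrable (fun ω => rexp (u * ‖g ω‖ ^ 2)) μ ∧
      ∫ ω, rexp (u * ‖g ω‖ ^ 2) ∂μ = (1 - u)⁻¹ := by
  obtain ⟨hgm, hre, him, hind⟩ := hg
  have h1u : 0 ≤ 1 - u := by linarith
  have hφm : Measurable fun x : ℝ => rexp (u * x ^ 2) :=
    ((measurable_id.pow_const 2).const_mul u).exp
  have hrem : Measurable fun ω => (g ω).re := Complex.measurable_re.comp hgm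
  have himm : Measurable fun ω => (g ω).im := Complex.measurable_im.comp hgm
  -- factorization of the integrand
  have hsplit : ∀ ω, rexp (u * ‖g ω‖ ^ 2)
      = rexp (u * (g ω).re ^ 2) * rexp (u * (g ω).im ^ 2) := by
    intro ω
    rw [← Real.exp_add, ← mul_add]
    congr 2
    rw [Complex.sq_norm, Complex.normSq_apply]
    ring
  -- independence of the two factors
  have hiφ : IndepFun (fun ω => rexp (u * (g ω).re ^ 2)) (fun ω => rexp (u * (g ω).im ^ 2)) μ :=
    hind.comp hφm hφm
  have hIre : Integrable (fun ω => rexp (u * (g ω).re ^ 2)) μ := by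
    have := (gauss_exp_sq_integral hu).1
    rw [← hre] at this
    exact (integrable_map_measure hφm.aestronglyMeasurable hrem.aemeasurable).mp this
  have hIim : Integrable (fun ω => rexp (u * (g ω).im ^ 2)) μ := by
    have := (gauss_exp_sq_integral hu).1
    rw [← him] at this
    exact (integrable_map_measure hφm.aestronglyMeasurable himm.aemeasurable).mp this
  have hEre : ∫ ω, rexp (u * (g ω).re ^ 2) ∂μ = (Real.sqrt (1 - u))⁻¹ := by
    rw [← integral_map hrem.aemeasurable hφm.aestronglyMeasurable, hre]
    exact (gauss_exp_sq_integral hu).2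
  have hEim : ∫ ω, rexp (u * (g ω).im ^ 2) ∂μ = (Real.sqrt (1 - u))⁻¹ := by
    rw [← integral_map himm.aemeasurable hφm.aestronglyMeasurable, him]
    exact (gauss_exp_sq_integral hu).2
  constructor
  · exact ((hiφ.integrable_mul hIre hIim).congr
      (Filter.Eventually.of_forall fun ω => (hsplit ω).symm))
  · calc ∫ ω, rexp (u * ‖g ω‖ ^ 2) ∂μ
        = ∫ ω, rexp (u * (g ω).re ^ 2) * rexp (u * (g ω).im ^ 2) ∂μ := by
          exact integral_congr_ae (Filter.Eventually.of_forall hsplit)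
      _ = (∫ ω, rexp (u * (g ω).re ^ 2) ∂μ) * ∫ ω, rexp (u * (g ω).im ^ 2) ∂μ :=
          hiφ.integral_mul_eq_mul_integral hIre.aestronglyMeasurable hIim.aestronglyMeasurable
      _ = (1 - u)⁻¹ := by
          rw [hEre, hEim, ← mul_inv, Real.mul_self_sqrt h1u]

set_option maxHeartbeats 1000000 in
/-- Lemma 3.1: tail bound for the `H^s` norm of the high-frequency part of the random
data, `μ_F({φ : N₀^{1/2−s} ‖P_{≥N₀}φ‖_{H^s} > λ}) ≲ exp(−λ^c)`. -/
theorem high_frequency_tail_bound {Ω : Type*} [MeasurableSpace Ω] (μ : Measure Ω)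
    [IsProbabilityMeasure μ] (c₀ : ℝ) (hc₀ : 0 < c₀) (z : ℕ → ℝ)
    (hz : ∀ n : ℕ, 1 ≤ n → c₀ * n ≤ z n) (g : ℕ → Ω → ℂ)
    (hindep : iIndepFun g μ)
    (hgauss : ∀ n, IsStdComplexGaussian μ (g n)) (s : ℝ) (hs0 : 0 ≤ s)
    (hs : s < 1 / 2) :
    ∃ c > (0 : ℝ), ∃ C > (0 : ℝ), ∀ N₀ : ℕ, 2 ≤ N₀ → ∀ lam : ℝ, 0 < lam →
      μ {ω | lam < (N₀ : ℝ) ^ ((1 : ℝ) / 2 - s) *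
          Real.sqrt (∑' n : {n : ℕ // N₀ ≤ n}, ‖g n ω‖ ^ 2 / z n ^ (2 * (1 - s)))}
        ≤ ENNReal.ofReal (C * Real.exp (-(lam ^ (c : ℝ)))) := by
  set p : ℝ := 2 * (1 - s) with hp
  set q : ℝ := 1 - 2 * s with hq
  have hq0 : 0 < q := by rw [hq]; linarith
  have hq1 : q ≤ 1 := by rw [hq]; linarith
  have hpq : p = 1 + q := by rw [hp, hq]; ring
  set t₀ : ℝ := min (c₀ ^ p) 1 with ht₀def
  have ht₀ : 0 < t₀ := lt_min (Real.rpow_pos_of_pos hc₀ _) one_pos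
  have ht₀c : t₀ ≤ c₀ ^ p := min_le_left _ _
  set C : ℝ := Real.exp (8 / q + (4 * t₀)⁻¹) with hCdef
  refine ⟨1, one_pos, C, Real.exp_pos _, ?_⟩
  intro N₀ hN₀ lam hlam
  have hN₀R : (2 : ℝ) ≤ (N₀ : ℝ) := by exact_mod_cast hN₀
  have hN₀pos : (0 : ℝ) < (N₀ : ℝ) := by linarith
  have hNq : (0 : ℝ) < (N₀ : ℝ) ^ q := Real.rpow_pos_of_pos hN₀pos _
  set X : ℕ → Ω → ℝ := fun n => (fun w : ℂ => ‖w‖ ^ 2 / z n ^ p) ∘ (g n) with hX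
  set r : ℝ := lam ^ 2 * (((N₀ : ℝ)) ^ q)⁻¹ with hr
  have hrpos : 0 < r := by positivity
  set t : ℝ := t₀ * ((N₀ : ℝ)) ^ q with ht
  have htpos : 0 < t := by positivity
  set a : ℕ → ℝ := fun n => (z n ^ p)⁻¹ with ha
  -- basic facts about z and a
  have hzpos : ∀ n : ℕ, 1 ≤ n → (0 : ℝ) < z n := by
    intro n hn
    have h1 : (1 : ℝ) ≤ (n : ℝ) := by exact_mod_cast hn
    have := hz n hn
    nlinarith
  have ha_nonneg : ∀ n : ℕ, 1 ≤ n → 0 ≤ a n := fun n hn =>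
    inv_nonneg.mpr (Real.rpow_nonneg (hzpos n hn).le _)
  have ha_le : ∀ n : ℕ, 1 ≤ n → a n ≤ (c₀ ^ p)⁻¹ * (((n : ℝ)) ^ p)⁻¹ := by
    intro n hn
    have h1 : (1 : ℝ) ≤ (n : ℝ) := by exact_mod_cast hn
    have hnpos : (0 : ℝ) < (n : ℝ) := by linarith
    have hcn : c₀ ^ p * (n : ℝ) ^ p ≤ z n ^ p := by
      rw [← Real.mul_rpow hc₀.le hnpos.le]
      exact Real.rpow_le_rpow (by positivity) (hz n hn) (by rw [hpq]; linarith)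
    rw [ha, ← mul_inv]
    exact inv_anti₀ (by positivity) hcn
  -- t * a n ≤ 1/2 for n ≥ N₀
  have hta : ∀ n : ℕ, N₀ ≤ n → t * a n ≤ 1 / 2 := by
    intro n hn
    have hn1 : 1 ≤ n := le_trans (by omega) hn
    have hnR : (N₀ : ℝ) ≤ (n : ℝ) := by exact_mod_cast hn
    have hNp : ((N₀ : ℝ)) ^ p ≤ ((n : ℝ)) ^ p :=
      Real.rpow_le_rpow hN₀pos.le hnR (by rw [hpq]; linarith)
    have hNppos : (0 : ℝ) < ((N₀ : ℝ)) ^ p := Real.rpow_pos_of_pos hN₀pos _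
    calc t * a n ≤ t * ((c₀ ^ p)⁻¹ * (((n : ℝ)) ^ p)⁻¹) :=
          mul_le_mul_of_nonneg_left (ha_le n hn1) htpos.le
      _ ≤ t * ((c₀ ^ p)⁻¹ * (((N₀ : ℝ)) ^ p)⁻¹) := by
          refine mul_le_mul_of_nonneg_left (mul_le_mul_of_nonneg_left
            (inv_anti₀ hNppos hNp) (by positivity)) htpos.le
      _ = (t₀ * (c₀ ^ p)⁻¹) * ((N₀ : ℝ) ^ q * ((N₀ : ℝ) ^ p)⁻¹) := by rw [ht]; ring
      _ ≤ 1 * ((N₀ : ℝ) ^ q * ((N₀ : ℝ) ^ p)⁻¹) := by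
          refine mul_le_mul_of_nonneg_right ?_ (by positivity)
          rw [← div_eq_mul_inv, div_le_one (Real.rpow_pos_of_pos hc₀ _)]
          exact ht₀c
      _ = (N₀ : ℝ) ^ (q - p) := by
          rw [one_mul, ← Real.rpow_neg hN₀pos.le, ← Real.rpow_add hN₀pos, sub_eq_add_neg]
      _ ≤ 1 / 2 := by
          have hqp : q - p = -1 := by rw [hq, hp]; ring
          rw [hqp, Real.rpow_neg_one]
          rw [inv_le_comm₀ hN₀pos (by norm_num)]
          linarith
  -- sum bound
  have hsum_a : ∀ M : ℕ, t * ∑ n ∈ Finset.Ico N₀ M, a n ≤ 4 / q := by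
    intro M
    have h1 : ∑ n ∈ Finset.Ico N₀ M, a n ≤ (c₀ ^ p)⁻¹ * ((4 / q) * (((N₀ : ℝ)) ^ q)⁻¹) := by
      calc ∑ n ∈ Finset.Ico N₀ M, a n
          ≤ ∑ n ∈ Finset.Ico N₀ M, (c₀ ^ p)⁻¹ * (((n : ℝ)) ^ p)⁻¹ :=
            Finset.sum_le_sum fun n hn =>
              ha_le n (le_trans (by omega) (Finset.mem_Ico.mp hn).1)
        _ = (c₀ ^ p)⁻¹ * ∑ n ∈ Finset.Ico N₀ M, (((n : ℝ)) ^ p)⁻¹ := by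
            rw [← Finset.mul_sum]
        _ ≤ (c₀ ^ p)⁻¹ * ((4 / q) * (((N₀ : ℝ)) ^ q)⁻¹) := by
            refine mul_le_mul_of_nonneg_left ?_ (by positivity)
            have := tail_sum hq0 hq1 (show 1 ≤ N₀ by omega) M
            simpa [← hpq] using this
    calc t * ∑ n ∈ Finset.Ico N₀ M, a n
        ≤ t * ((c₀ ^ p)⁻¹ * ((4 / q) * (((N₀ : ℝ)) ^ q)⁻¹)) :=
          mul_le_mul_of_nonneg_left h1 htpos.le
      _ = (t₀ * (c₀ ^ p)⁻¹) * (4 / q) * ((N₀ : ℝ) ^ q * ((N₀ : ℝ) ^ q)⁻¹) := by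
          rw [ht]; ring
      _ = (t₀ * (c₀ ^ p)⁻¹) * (4 / q) := by rw [mul_inv_cancel₀ hNq.ne', mul_one]
      _ ≤ 1 * (4 / q) := by
          refine mul_le_mul_of_nonneg_right ?_ (by positivity)
          rw [← div_eq_mul_inv, div_le_one (Real.rpow_pos_of_pos hc₀ _)]
          exact ht₀c
      _ = 4 / q := one_mul _
  -- measurability and independence of the X n
  have hXm : ∀ n, Measurable (X n) := fun n =>
    ((measurable_id.norm.pow_const 2).div_const _).comp (hgauss n).1
  have hXind : iIndepFun X μ :=
    hindep.comp (fun n w => ‖w‖ ^ 2 / z n ^ p)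
      (fun n => (measurable_id.norm.pow_const 2).div_const _)
  -- per-n integrability and mgf bound
  have hmain : ∀ n : ℕ, N₀ ≤ n →
      Integrable (fun ω => rexp (t * X n ω)) μ ∧ mgf (X n) μ t ≤ rexp (2 * (t * a n)) := by
    intro n hn
    have hn1 : (1 : ℕ) ≤ n := le_trans (by omega) hn
    have hu0 : 0 ≤ t * a n := mul_nonneg htpos.le (ha_nonneg n hn1)
    have hu2 : t * a n ≤ 1 / 2 := hta n hn
    have hu1 : t * a n < 1 := by linarith
    have heq : (fun ω => rexp (t * X n ω)) = fun ω => rexp ((t * a n) * ‖g n ω‖ ^ 2) := by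
      funext ω
      congr 1
      show t * (‖g n ω‖ ^ 2 / z n ^ p) = t * a n * ‖g n ω‖ ^ 2
      rw [ha, div_eq_mul_inv]; ring
    obtain ⟨hint, hval⟩ := complex_gauss_exp_moment (hgauss n) hu0 hu1
    have hmgf : mgf (X n) μ t = (1 - t * a n)⁻¹ := by
      show ∫ ω, rexp (t * X n ω) ∂μ = _
      rw [heq]
      exact hval
    refine ⟨by rw [heq]; exact hint, ?_⟩
    rw [hmgf]
    have h12 : (1 - t * a n)⁻¹ ≤ 1 + 2 * (t * a n) := by
      rw [inv_eq_one_div, div_le_iff₀ (by linarith)]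
      nlinarith
    have h13 := Real.add_one_le_exp (2 * (t * a n))
    linarith
  -- Chernoff bound for each finite block
  have hM : ∀ M : ℕ, μ {ω | r < ∑ n ∈ Finset.Ico N₀ M, X n ω}
      ≤ ENNReal.ofReal (C * rexp (-(lam ^ ((1 : ℝ) : ℝ)))) := by
    intro M
    set F := Finset.Ico N₀ M with hF
    have hint : ∀ n ∈ F, Integrable (fun ω => rexp (t * X n ω)) μ := fun n hn =>
      (hmain n (Finset.mem_Ico.mp hn).1).1
    have hintS : Integrable (fun ω => rexp (t * (∑ n ∈ F, X n) ω)) μ :=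
      hXind.integrable_exp_mul_sum hXm hint
    have chern := measure_ge_le_exp_mul_mgf (X := ∑ n ∈ F, X n) (μ := μ) r htpos.le hintS
    have hmgfsum : mgf (∑ n ∈ F, X n) μ t = ∏ n ∈ F, mgf (X n) μ t := hXind.mgf_sum hXm F
    have hprod : ∏ n ∈ F, mgf (X n) μ t ≤ rexp (2 * (t * ∑ n ∈ F, a n)) := by
      calc ∏ n ∈ F, mgf (X n) μ t ≤ ∏ n ∈ F, rexp (2 * (t * a n)) :=
            Finset.prod_le_prod (fun n _ => mgf_nonneg)
              (fun n hn => (hmain n (Finset.mem_Ico.mp hn).1).2)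
        _ = rexp (∑ n ∈ F, 2 * (t * a n)) := by rw [← Real.exp_sum]
        _ = rexp (2 * (t * ∑ n ∈ F, a n)) := by
            congr 1
            rw [Finset.mul_sum, Finset.mul_sum]
    have htr : t * r = t₀ * lam ^ 2 := by
      have h0 : t * r = t₀ * lam ^ 2 * ((N₀ : ℝ) ^ q * ((N₀ : ℝ) ^ q)⁻¹) := by
        rw [ht, hr]; ring
      rw [h0, mul_inv_cancel₀ hNq.ne', mul_one]
    have hreal : (μ {ω | r ≤ (∑ n ∈ F, X n) ω}).toReal ≤ C * rexp (-(lam ^ ((1 : ℝ) : ℝ))) := by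
      have h4t : (4 * t₀) * (4 * t₀)⁻¹ = 1 := mul_inv_cancel₀ (by positivity)
      have hkey : t₀ * lam ^ 2 + (4 * t₀)⁻¹ - lam = (2 * t₀ * lam - 1) ^ 2 * (4 * t₀)⁻¹ := by
        linear_combination (lam - t₀ * lam ^ 2) * h4t
      have hkey' : lam ≤ t₀ * lam ^ 2 + (4 * t₀)⁻¹ := by
        nlinarith [mul_nonneg (sq_nonneg (2 * t₀ * lam - 1)) (inv_nonneg.mpr
          (by positivity : (0:ℝ) ≤ 4 * t₀))]
      calc (μ {ω | r ≤ (∑ n ∈ F, X n) ω}).toReal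
          ≤ rexp (-t * r) * mgf (∑ n ∈ F, X n) μ t := chern
        _ ≤ rexp (-t * r) * rexp (2 * (t * ∑ n ∈ F, a n)) := by
            rw [hmgfsum]
            exact mul_le_mul_of_nonneg_left hprod (Real.exp_pos _).le
        _ = rexp (2 * (t * ∑ n ∈ F, a n) - t * r) := by rw [← Real.exp_add]; congr 1; ring
        _ ≤ rexp (8 / q + (4 * t₀)⁻¹ - lam) := by
            rw [Real.exp_le_exp, htr]
            have h6 : t * ∑ n ∈ F, a n ≤ 4 / q := by rw [hF]; exact hsum_a M
            set u1 : ℝ := t * ∑ n ∈ F, a n with hu1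
            set u2 : ℝ := 4 / q with hu2
            set u3 : ℝ := (4 * t₀)⁻¹ with hu3
            set u4 : ℝ := t₀ * lam ^ 2 with hu4
            have h8 : (8 : ℝ) / q = 2 * u2 := by rw [hu2]; ring
            rw [h8]
            linarith
        _ = C * rexp (-(lam ^ ((1 : ℝ) : ℝ))) := by
            rw [hCdef, Real.rpow_one, ← Real.exp_add, sub_eq_add_neg]
    have hsub2 : {ω | r < ∑ n ∈ F, X n ω} ⊆ {ω | r ≤ (∑ n ∈ F, X n) ω} := by
      intro ω hω
      simp only [Set.mem_setOf_eq, Finset.sum_apply] at *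
      exact le_of_lt hω
    calc μ {ω | r < ∑ n ∈ F, X n ω} ≤ μ {ω | r ≤ (∑ n ∈ F, X n) ω} := measure_mono hsub2
      _ = ENNReal.ofReal ((μ {ω | r ≤ (∑ n ∈ F, X n) ω}).toReal) :=
          (ENNReal.ofReal_toReal (measure_ne_top μ _)).symm
      _ ≤ ENNReal.ofReal (C * rexp (-(lam ^ ((1 : ℝ) : ℝ)))) :=
          ENNReal.ofReal_le_ofReal hreal
  -- monotonicity of the blocks
  have hXnn : ∀ n : ℕ, 1 ≤ n → ∀ ω, 0 ≤ X n ω := by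
    intro n hn ω
    show 0 ≤ ‖g n ω‖ ^ 2 / z n ^ p
    exact div_nonneg (by positivity) (Real.rpow_nonneg (hzpos n hn).le _)
  have hmono : Monotone fun M : ℕ => {ω | r < ∑ n ∈ Finset.Ico N₀ M, X n ω} := by
    intro M M' hMM ω hω
    simp only [Set.mem_setOf_eq] at *
    refine lt_of_lt_of_le hω (Finset.sum_le_sum_of_subset_of_nonneg
      (Finset.Ico_subset_Ico le_rfl hMM) ?_)
    intro n hn _
    exact hXnn n (le_trans (by omega) (Finset.mem_Ico.mp hn).1) ω
  -- the bad set is contained in the union of the blocks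
  have hsubset : {ω | lam < (N₀ : ℝ) ^ ((1 : ℝ) / 2 - s) *
      Real.sqrt (∑' n : {n : ℕ // N₀ ≤ n}, ‖g n ω‖ ^ 2 / z n ^ p)}
      ⊆ ⋃ M : ℕ, {ω | r < ∑ n ∈ Finset.Ico N₀ M, X n ω} := by
    intro ω hω
    simp only [Set.mem_setOf_eq] at hω
    rw [Set.mem_iUnion]
    have hNδ : (0 : ℝ) < (N₀ : ℝ) ^ ((1 : ℝ) / 2 - s) := Real.rpow_pos_of_pos hN₀pos _
    have hsqδ : ((N₀ : ℝ) ^ ((1 : ℝ) / 2 - s)) ^ 2 = (N₀ : ℝ) ^ q := by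
      rw [← Real.rpow_natCast ((N₀ : ℝ) ^ ((1 : ℝ) / 2 - s)) 2,
        ← Real.rpow_mul hN₀pos.le]
      congr 1
      rw [hq]; push_cast; ring
    by_cases hsumm : Summable (fun n : {n : ℕ // N₀ ≤ n} => ‖g n ω‖ ^ 2 / z n ^ p)
    · have h1 : lam / ((N₀ : ℝ) ^ ((1 : ℝ) / 2 - s)) <
          Real.sqrt (∑' n : {n : ℕ // N₀ ≤ n}, ‖g n ω‖ ^ 2 / z n ^ p) := by
        rw [div_lt_iff₀ hNδ, mul_comm]
        exact hω
      have h2 := (Real.lt_sqrt (by positivity)).mp h1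
      have h3 : r < ∑' n : {n : ℕ // N₀ ≤ n}, ‖g n ω‖ ^ 2 / z n ^ p := by
        have heq2 : (lam / ((N₀ : ℝ) ^ ((1 : ℝ) / 2 - s))) ^ 2 = r := by
          rw [div_pow, hsqδ, hr, div_eq_mul_inv]
        rw [← heq2]
        exact h2
      have hT_ind : (∑' n : {n : ℕ // N₀ ≤ n}, ‖g n ω‖ ^ 2 / z n ^ p)
          = ∑' n : ℕ, Set.indicator {m : ℕ | N₀ ≤ m} (fun k => ‖g k ω‖ ^ 2 / z k ^ p) n :=
        tsum_subtype {m : ℕ | N₀ ≤ m} (fun k => ‖g k ω‖ ^ 2 / z k ^ p)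
      have hSind : Summable (Set.indicator {m : ℕ | N₀ ≤ m}
          (fun k => ‖g k ω‖ ^ 2 / z k ^ p)) := summable_subtype_iff_indicator.mp hsumm
      have htend := hSind.hasSum.tendsto_sum_nat
      rw [hT_ind] at h3
      obtain ⟨M, hM'⟩ := (htend.eventually_const_lt h3).exists
      refine ⟨M, ?_⟩
      rw [Finset.sum_indicator_eq_sum_filter] at hM'
      have hfil : (Finset.range M).filter (fun n => n ∈ {m : ℕ | N₀ ≤ m})
          = Finset.Ico N₀ M := by
        ext n
        simp only [Finset.mem_filter, Finset.mem_range, Finset.mem_Ico, Set.mem_setOf_eq]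
        omega
      rw [hfil] at hM'
      exact hM'
    · exfalso
      rw [tsum_eq_zero_of_not_summable hsumm, Real.sqrt_zero, mul_zero] at hω
      exact absurd hω (not_lt.mpr hlam.le)
  refine le_trans (measure_mono hsubset) ?_
  rw [hmono.measure_iUnion]
  exact iSup_le hM
end

section
/- Let C₁ > 0 and let (z_n)_{n≥1} be a sequence of real numbers satisfying |z_n − π(n − 1/4)| ≤ C₁/n for all n ≥ 1. Then there exists a constant C > 0 (depending only on C₁) such that for every integer M ≥ 1 and every choice of complex numbers (a_n)_{M ≤ n < 2M}, ∫₀¹ |∑_{M ≤ n < 2M} a_n e^{2π i z_n r}|⁴ dr ≤ C · M · (∑_{M ≤ n < 2M} |a_n|²)². -/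
open Real

lemma norm_exp_mul_I_sub_one_le (x : ℝ) : ‖Complex.exp (x * Complex.I) - 1‖ ≤ |x| := by
  have h : Complex.exp (x * Complex.I) - 1
      = ((Real.cos x - 1 : ℝ) : ℂ) + ((Real.sin x : ℝ) : ℂ) * Complex.I := by
    rw [Complex.exp_mul_I, ← Complex.ofReal_cos, ← Complex.ofReal_sin]; push_cast; ring
  rw [h, Complex.norm_add_mul_I]
  have h2 : Real.sin (x/2) ^ 2 ≤ (x/2) ^ 2 := Real.sin_sq_le_sq
  have h3 : Real.cos x = 1 - 2 * Real.sin (x/2) ^ 2 := by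
    have h := Real.cos_two_mul (x/2)
    rw [show 2*(x/2) = x by ring] at h
    nlinarith [Real.sin_sq_add_cos_sq (x/2)]
  have h4 : (Real.cos x - 1)^2 + Real.sin x ^2 ≤ x^2 := by
    nlinarith [Real.sin_sq_add_cos_sq x]
  calc Real.sqrt ((Real.cos x - 1)^2 + Real.sin x ^2) ≤ Real.sqrt (x^2) :=
        Real.sqrt_le_sqrt h4
    _ = |x| := Real.sqrt_sq_eq_abs x

lemma norm_exp_sub_exp_le (x y : ℝ) :
    ‖Complex.exp (x * Complex.I) - Complex.exp (y * Complex.I)‖ ≤ |x - y| := by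
  have h : Complex.exp (x * Complex.I) - Complex.exp (y * Complex.I)
      = Complex.exp (y * Complex.I) * (Complex.exp (((x - y : ℝ) : ℂ) * Complex.I) - 1) := by
    rw [mul_sub, ← Complex.exp_add, mul_one]
    congr 2
    push_cast; ring
  rw [h, norm_mul, Complex.norm_exp_ofReal_mul_I, one_mul]
  exact norm_exp_mul_I_sub_one_le _

lemma integral_exp_orth (s t : ℕ) :
    (∫ u in (0:ℝ)..1,
        Complex.exp ((2*(π:ℂ)*s*Complex.I - 2*(π:ℂ)*t*Complex.I) * u))
      = if s = t then 1 else 0 := by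
  by_cases h : s = t
  · simp [h]
  · have hst : (s:ℂ) ≠ (t:ℂ) := by exact_mod_cast h
    have hc : (2*(π:ℂ)*s*Complex.I - 2*(π:ℂ)*t*Complex.I) ≠ 0 := by
      have : (2*(π:ℂ)*s*Complex.I - 2*(π:ℂ)*t*Complex.I)
          = 2*(π:ℂ)*Complex.I*((s:ℂ) - t) := by ring
      rw [this]
      apply mul_ne_zero
      apply mul_ne_zero
      · apply mul_ne_zero two_ne_zero
        exact_mod_cast Real.pi_ne_zero
      · exact Complex.I_ne_zero
      · exact sub_ne_zero.mpr hst
    rw [integral_exp_mul_complex hc]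
    have hone : Complex.exp ((2*(π:ℂ)*s*Complex.I - 2*(π:ℂ)*t*Complex.I) * (1:ℝ)) = 1 := by
      have : ((2*(π:ℂ)*s*Complex.I - 2*(π:ℂ)*t*Complex.I) * ((1:ℝ):ℂ))
          = (((s:ℤ) - (t:ℤ) : ℤ) : ℂ) * (2 * (π:ℂ) * Complex.I) := by push_cast; ring
      rw [this, Complex.exp_int_mul_two_pi_mul_I]
    rw [hone]
    simp [h]

lemma parseval_trig (N : ℕ) (b : ℕ → ℂ) :
    (∫ u in (0:ℝ)..1,
        ‖∑ s ∈ Finset.range N, b s * Complex.exp (2*(π:ℂ)*s*Complex.I*u)‖^2)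
      = ∑ s ∈ Finset.range N, ‖b s‖^2 := by
  have hcont : ∀ (c : ℂ), Continuous fun u : ℝ => Complex.exp (c * u) := fun c =>
    Complex.continuous_exp.comp (continuous_const.mul Complex.continuous_ofReal)
  have hterm : ∀ (s t : ℕ) (u : ℝ),
      (b s * Complex.exp (2*(π:ℂ)*s*Complex.I*u)) *
        (starRingEnd ℂ) (b t * Complex.exp (2*(π:ℂ)*t*Complex.I*u))
      = b s * (starRingEnd ℂ) (b t) *
          Complex.exp ((2*(π:ℂ)*s*Complex.I - 2*(π:ℂ)*t*Complex.I) * u) := by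
    intro s t u
    rw [map_mul, ← Complex.exp_conj]
    have hco : (starRingEnd ℂ) (2*(π:ℂ)*t*Complex.I*u) = -(2*(π:ℂ)*t*Complex.I*u) := by
      simp only [map_mul, Complex.conj_ofReal, Complex.conj_I, map_ofNat,
        Complex.conj_natCast]
      ring
    rw [hco]
    rw [show (b s * Complex.exp (2*(π:ℂ)*s*Complex.I*u)) *
          ((starRingEnd ℂ) (b t) * Complex.exp (-(2*(π:ℂ)*t*Complex.I*u)))
        = b s * (starRingEnd ℂ) (b t) *
          (Complex.exp (2*(π:ℂ)*s*Complex.I*u) * Complex.exp (-(2*(π:ℂ)*t*Complex.I*u))) by ring]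
    rw [← Complex.exp_add]
    congr 2
    ring
  have key : ∀ u : ℝ,
      ((‖∑ s ∈ Finset.range N, b s * Complex.exp (2*(π:ℂ)*s*Complex.I*u)‖^2 : ℝ) : ℂ)
      = ∑ s ∈ Finset.range N, ∑ t ∈ Finset.range N,
          b s * (starRingEnd ℂ) (b t) *
            Complex.exp ((2*(π:ℂ)*s*Complex.I - 2*(π:ℂ)*t*Complex.I) * u) := by
    intro u
    have h1 : ∀ z : ℂ, ((‖z‖^2 : ℝ) : ℂ) = z * (starRingEnd ℂ) z := by
      intro z
      rw [Complex.mul_conj, Complex.normSq_eq_norm_sq]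
    rw [h1, map_sum, Finset.sum_mul_sum]
    exact Finset.sum_congr rfl fun s _ => Finset.sum_congr rfl fun t _ => hterm s t u
  have main : ((∫ u in (0:ℝ)..1,
      ‖∑ s ∈ Finset.range N, b s * Complex.exp (2*(π:ℂ)*s*Complex.I*u)‖^2 : ℝ) : ℂ)
      = ((∑ s ∈ Finset.range N, ‖b s‖^2 : ℝ) : ℂ) := by
    rw [← intervalIntegral.integral_ofReal]
    simp only [key]
    rw [intervalIntegral.integral_finset_sum]
    · have : ∀ s ∈ Finset.range N,
          (∫ u in (0:ℝ)..1, ∑ t ∈ Finset.range N,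
            b s * (starRingEnd ℂ) (b t) *
              Complex.exp ((2*(π:ℂ)*s*Complex.I - 2*(π:ℂ)*t*Complex.I) * u))
          = ∑ t ∈ Finset.range N, (b s * (starRingEnd ℂ) (b t)) *
              (if s = t then (1:ℂ) else 0) := by
        intro s _
        rw [intervalIntegral.integral_finset_sum]
        · exact Finset.sum_congr rfl fun t _ => by
            rw [intervalIntegral.integral_const_mul, integral_exp_orth]
        · intro t _
          exact (Continuous.intervalIntegrable (by
            exact continuous_const.mul (hcont _)) _ _)
      rw [Finset.sum_congr rfl this]
      push_cast
      refine Finset.sum_congr rfl fun s hs => ?_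
      rw [Finset.sum_eq_single s]
      · simp [Complex.mul_conj, Complex.normSq_eq_norm_sq]
      · intro t _ hts; simp [Ne.symm hts]
      · intro hs'; exact absurd hs hs'
    · intro s _
      apply Continuous.intervalIntegrable
      apply continuous_finset_sum
      intro t _
      exact continuous_const.mul (hcont _)
  exact_mod_cast main

lemma quad_bound (x y d : ℝ) (hx : 0 ≤ x) (hy : 0 ≤ y) (hd : 0 ≤ d) (h : x ≤ y + d) :
    x^4 ≤ 8*y^4 + 8*d^4 := by
  have h1 : x^4 ≤ (y+d)^4 := pow_le_pow_left₀ hx h 4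
  nlinarith [sq_nonneg (y - d), sq_nonneg (y + d), sq_nonneg (y^2 - d^2), mul_nonneg hy hd,
    sq_nonneg (y*d)]


lemma step5_lemma (M : ℕ) (a : ℕ → ℂ) :
    (∑ s ∈ Finset.range (4*M),
      ‖∑ p ∈ (Finset.Ico M (2*M) ×ˢ Finset.Ico M (2*M)).filter (fun p => p.1 + p.2 = s),
          a p.1 * a p.2‖^2)
      ≤ M * (∑ n ∈ Finset.Ico M (2*M), ‖a n‖^2)^2 := by
  set P := Finset.Ico M (2*M) with hP
  have hPcard : P.card = M := by rw [hP, Nat.card_Ico]; omega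
  have hmaps : ∀ p ∈ P ×ˢ P, p.1 + p.2 ∈ Finset.range (4*M) := by
    intro p hp
    rw [Finset.mem_product] at hp
    obtain ⟨h1, h2⟩ := hp
    rw [hP, Finset.mem_Ico] at h1 h2
    rw [Finset.mem_range]; omega
  have hstep : ∀ s : ℕ,
      ‖∑ p ∈ (P ×ˢ P).filter (fun p => p.1 + p.2 = s), a p.1 * a p.2‖^2
        ≤ (M:ℝ) * ∑ p ∈ (P ×ˢ P).filter (fun p => p.1 + p.2 = s), (‖a p.1‖ * ‖a p.2‖)^2 := by
    intro s
    set F := (P ×ˢ P).filter (fun p => p.1 + p.2 = s) with hF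
    have h1 : ‖∑ p ∈ F, a p.1 * a p.2‖ ≤ ∑ p ∈ F, ‖a p.1‖ * ‖a p.2‖ := by
      refine (norm_sum_le _ _).trans_eq ?_
      exact Finset.sum_congr rfl fun p _ => norm_mul _ _
    have h2 : ‖∑ p ∈ F, a p.1 * a p.2‖^2 ≤ (∑ p ∈ F, ‖a p.1‖ * ‖a p.2‖)^2 :=
      pow_le_pow_left₀ (norm_nonneg _) h1 2
    have h3 : (∑ p ∈ F, ‖a p.1‖ * ‖a p.2‖)^2
        ≤ (F.card : ℝ) * ∑ p ∈ F, (‖a p.1‖ * ‖a p.2‖)^2 :=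
      sq_sum_le_card_mul_sum_sq
    have h4 : (F.card : ℝ) ≤ (M:ℝ) := by
      have hc : F.card ≤ P.card := by
        apply Finset.card_le_card_of_injOn Prod.fst
        · intro p hp
          rw [hF, Finset.mem_coe, Finset.mem_filter, Finset.mem_product] at hp
          exact hp.1.1
        · intro p hp q hq hpq
          simp only [hF, Finset.coe_filter, Set.mem_setOf_eq, Finset.mem_product] at hp hq
          exact Prod.ext hpq (by omega)
      rw [hPcard] at hc
      exact_mod_cast hc
    have h5 : (0:ℝ) ≤ ∑ p ∈ F, (‖a p.1‖ * ‖a p.2‖)^2 :=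
      Finset.sum_nonneg fun p _ => sq_nonneg _
    nlinarith
  calc (∑ s ∈ Finset.range (4*M),
      ‖∑ p ∈ (P ×ˢ P).filter (fun p => p.1 + p.2 = s), a p.1 * a p.2‖^2)
      ≤ ∑ s ∈ Finset.range (4*M),
          (M:ℝ) * ∑ p ∈ (P ×ˢ P).filter (fun p => p.1 + p.2 = s), (‖a p.1‖ * ‖a p.2‖)^2 :=
        Finset.sum_le_sum fun s _ => hstep s
    _ = (M:ℝ) * ∑ s ∈ Finset.range (4*M),
          ∑ p ∈ (P ×ˢ P).filter (fun p => p.1 + p.2 = s), (‖a p.1‖ * ‖a p.2‖)^2 := by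
        rw [Finset.mul_sum]
    _ = (M:ℝ) * ∑ p ∈ P ×ˢ P, (‖a p.1‖ * ‖a p.2‖)^2 := by
        rw [Finset.sum_fiberwise_of_maps_to hmaps]
    _ = (M:ℝ) * (∑ n ∈ P, ‖a n‖^2)^2 := by
        congr 1
        rw [sq (∑ n ∈ P, ‖a n‖^2), Finset.sum_mul_sum, Finset.sum_product]
        exact Finset.sum_congr rfl fun n _ => Finset.sum_congr rfl fun m _ => by
          rw [mul_pow]


lemma Gsq_eq (M : ℕ) (a : ℕ → ℂ) (r : ℝ) :
    (∑ n ∈ Finset.Ico M (2*M),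
        a n * Complex.exp (((2*π*(π*((n:ℝ)-1/4))*r : ℝ) : ℂ) * Complex.I))^2
    = Complex.exp (((-(π^2*r) : ℝ) : ℂ) * Complex.I) *
        ∑ s ∈ Finset.range (4*M),
          (∑ p ∈ (Finset.Ico M (2*M) ×ˢ Finset.Ico M (2*M)).filter
              (fun p => p.1 + p.2 = s), a p.1 * a p.2) *
            Complex.exp (2*(π:ℂ)*s*Complex.I*((π*r : ℝ) : ℂ)) := by
  set P := Finset.Ico M (2*M) with hP
  have hmaps : ∀ p ∈ P ×ˢ P, p.1 + p.2 ∈ Finset.range (4*M) := by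
    intro p hp
    rw [Finset.mem_product] at hp
    obtain ⟨h1, h2⟩ := hp
    rw [hP, Finset.mem_Ico] at h1 h2
    rw [Finset.mem_range]; omega
  have per : ∀ n ∈ P, ∀ m ∈ P,
      (a n * Complex.exp (((2*π*(π*((n:ℝ)-1/4))*r : ℝ) : ℂ) * Complex.I)) *
      (a m * Complex.exp (((2*π*(π*((m:ℝ)-1/4))*r : ℝ) : ℂ) * Complex.I))
      = Complex.exp (((-(π^2*r) : ℝ) : ℂ) * Complex.I) *
          (a n * a m * Complex.exp (2*(π:ℂ)*((n+m : ℕ):ℂ)*Complex.I*((π*r : ℝ) : ℂ))) := by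
    intro n _ m _
    rw [show (a n * Complex.exp (((2*π*(π*((n:ℝ)-1/4))*r : ℝ) : ℂ) * Complex.I)) *
      (a m * Complex.exp (((2*π*(π*((m:ℝ)-1/4))*r : ℝ) : ℂ) * Complex.I))
      = a n * a m * (Complex.exp (((2*π*(π*((n:ℝ)-1/4))*r : ℝ) : ℂ) * Complex.I) *
          Complex.exp (((2*π*(π*((m:ℝ)-1/4))*r : ℝ) : ℂ) * Complex.I)) by ring]
    rw [show Complex.exp (((-(π^2*r) : ℝ) : ℂ) * Complex.I) *
          (a n * a m * Complex.exp (2*(π:ℂ)*((n+m : ℕ):ℂ)*Complex.I*((π*r : ℝ) : ℂ)))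
        = a n * a m * (Complex.exp (((-(π^2*r) : ℝ) : ℂ) * Complex.I) *
            Complex.exp (2*(π:ℂ)*((n+m : ℕ):ℂ)*Complex.I*((π*r : ℝ) : ℂ))) by ring]
    rw [← Complex.exp_add, ← Complex.exp_add]
    congr 1
    push_cast
    ring
  rw [sq, Finset.sum_mul_sum]
  rw [Finset.sum_congr rfl fun n hn => Finset.sum_congr rfl fun m hm => per n hn m hm]
  rw [← Finset.sum_product' (f := fun n m => Complex.exp (((-(π^2*r) : ℝ) : ℂ) * Complex.I) *
      (a n * a m * Complex.exp (2*(π:ℂ)*((n+m : ℕ):ℂ)*Complex.I*((π*r : ℝ) : ℂ))))]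
  rw [← Finset.mul_sum]
  congr 1
  rw [← Finset.sum_fiberwise_of_maps_to hmaps
    (fun p => a p.1 * a p.2 * Complex.exp (2*(π:ℂ)*((p.1+p.2 : ℕ):ℂ)*Complex.I*((π*r : ℝ) : ℂ)))]
  refine Finset.sum_congr rfl fun s _ => ?_
  rw [Finset.sum_mul]
  refine Finset.sum_congr rfl fun p hp => ?_
  rw [Finset.mem_filter] at hp
  rw [hp.2]

set_option maxHeartbeats 1000000 in
lemma L4_int_G (M : ℕ) (hM : 1 ≤ M) (a : ℕ → ℂ) :
    (∫ r in (0:ℝ)..1, ‖∑ n ∈ Finset.Ico M (2*M),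
        a n * Complex.exp (((2*π*(π*((n:ℝ)-1/4))*r : ℝ) : ℂ) * Complex.I)‖^4)
      ≤ (4/π) * M * (∑ n ∈ Finset.Ico M (2*M), ‖a n‖^2)^2 := by
  set P := Finset.Ico M (2*M) with hP
  set b : ℕ → ℂ := fun s => ∑ p ∈ (P ×ˢ P).filter (fun p => p.1 + p.2 = s), a p.1 * a p.2
    with hb
  set K : ℝ → ℂ := fun u => ∑ s ∈ Finset.range (4*M), b s * Complex.exp (2*(π:ℂ)*s*Complex.I*u)
    with hK
  have hKc : Continuous K := by
    rw [hK]
    apply continuous_finset_sum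
    intro s _
    exact continuous_const.mul
      (Complex.continuous_exp.comp (continuous_const.mul Complex.continuous_ofReal))
  have hg : ∀ r : ℝ, ‖∑ n ∈ P,
      a n * Complex.exp (((2*π*(π*((n:ℝ)-1/4))*r : ℝ) : ℂ) * Complex.I)‖^4
      = ‖K (π * r)‖^2 := by
    intro r
    have h1 : ‖K (π * r)‖ = ‖(∑ n ∈ P,
        a n * Complex.exp (((2*π*(π*((n:ℝ)-1/4))*r : ℝ) : ℂ) * Complex.I))^2‖ := by
      simp +zetaDelta only [Gsq_eq M a r, norm_mul,
        Complex.norm_exp_ofReal_mul_I, one_mul]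
    rw [norm_pow] at h1
    rw [h1]
    ring
  -- change of variables and periodicity
  have hper : Function.Periodic (fun u : ℝ => ‖K u‖^2) 1 := by
    intro u
    have : K (u + 1) = K u := by
      rw [hK]
      refine Finset.sum_congr rfl fun s _ => ?_
      congr 1
      rw [show 2*(π:ℂ)*s*Complex.I*((u+1 : ℝ):ℂ)
          = 2*(π:ℂ)*s*Complex.I*(u:ℂ) + ((s:ℤ):ℂ) * (2*(π:ℂ)*Complex.I) by push_cast; ring]
      rw [Complex.exp_add, Complex.exp_int_mul_two_pi_mul_I, mul_one]
    simp only [this]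
  have hKint : ∀ t₁ t₂ : ℝ, IntervalIntegrable (fun u => ‖K u‖^2) MeasureTheory.volume t₁ t₂ :=
    fun t₁ t₂ => ((hKc.norm.pow 2)).intervalIntegrable t₁ t₂
  have step1 : (∫ r in (0:ℝ)..1, ‖∑ n ∈ P,
      a n * Complex.exp (((2*π*(π*((n:ℝ)-1/4))*r : ℝ) : ℂ) * Complex.I)‖^4)
      = π⁻¹ * ∫ u in (0:ℝ)..π, ‖K u‖^2 := by
    simp only [hg]
    rw [intervalIntegral.integral_comp_mul_left (fun u => ‖K u‖^2) Real.pi_ne_zero]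
    simp [smul_eq_mul]
  have step2 : (∫ u in (0:ℝ)..π, ‖K u‖^2) ≤ ∫ u in (0:ℝ)..4, ‖K u‖^2 := by
    have hsplit : (∫ u in (0:ℝ)..4, ‖K u‖^2)
        = (∫ u in (0:ℝ)..π, ‖K u‖^2) + ∫ u in (π:ℝ)..4, ‖K u‖^2 :=
      (intervalIntegral.integral_add_adjacent_intervals (hKint _ _) (hKint _ _)).symm
    have hnn : 0 ≤ ∫ u in (π:ℝ)..4, ‖K u‖^2 :=
      intervalIntegral.integral_nonneg (le_of_lt (lt_of_lt_of_le Real.pi_lt_d2 (by norm_num)))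
        (fun u _ => by positivity)
    linarith
  have step3 : (∫ u in (0:ℝ)..4, ‖K u‖^2) = 4 * ∫ u in (0:ℝ)..1, ‖K u‖^2 := by
    have h4 := hper.intervalIntegral_add_zsmul_eq 4 0 hKint
    simp only [zero_add] at h4
    rw [show ((4:ℤ) • (1:ℝ)) = (4:ℝ) by norm_num] at h4
    rw [h4, zsmul_eq_mul]
    norm_num
  have step4 : (∫ u in (0:ℝ)..1, ‖K u‖^2) = ∑ s ∈ Finset.range (4*M), ‖b s‖^2 :=
    parseval_trig (4*M) b
  have step5 : (∑ s ∈ Finset.range (4*M), ‖b s‖^2) ≤ M * (∑ n ∈ P, ‖a n‖^2)^2 :=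
    step5_lemma M a
  have hpi : (0:ℝ) < π := Real.pi_pos
  rw [step1]
  have hIK : 0 ≤ ∫ u in (0:ℝ)..1, ‖K u‖^2 := by
    rw [step4]; positivity
  calc π⁻¹ * ∫ u in (0:ℝ)..π, ‖K u‖^2
      ≤ π⁻¹ * ∫ u in (0:ℝ)..4, ‖K u‖^2 := by
        apply mul_le_mul_of_nonneg_left step2 (by positivity)
    _ = π⁻¹ * 4 * ∑ s ∈ Finset.range (4*M), ‖b s‖^2 := by rw [step3, step4]; ring
    _ ≤ π⁻¹ * 4 * (M * (∑ n ∈ P, ‖a n‖^2)^2) := by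
        apply mul_le_mul_of_nonneg_left step5 (by positivity)
    _ = (4/π) * M * (∑ n ∈ P, ‖a n‖^2)^2 := by ring


/-- The `L⁴` exponential-sum estimate with frequencies `z_n` satisfying the radial
Dirichlet eigenvalue asymptotics on the disc:
`∫₀¹ |∑_{M ≤ n < 2M} aₙ e^{2πi zₙ r}|⁴ dr ≤ C · M · (∑ |aₙ|²)²`. -/
theorem exponential_sum_L4_bound (C₁ : ℝ) (hC₁ : 0 < C₁) (z : ℕ → ℝ)
    (hz : ∀ n : ℕ, 1 ≤ n → |z n - π * (n - 1 / 4)| ≤ C₁ / n) :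
    ∃ C > (0 : ℝ), ∀ M : ℕ, 1 ≤ M → ∀ a : ℕ → ℂ,
      (∫ r in (0 : ℝ)..1,
          ‖∑ n ∈ Finset.Ico M (2 * M), a n * Complex.exp (((2 * π * z n * r : ℝ) : ℂ) * Complex.I)‖ ^ 4)
        ≤ C * M * (∑ n ∈ Finset.Ico M (2 * M), ‖a n‖ ^ 2) ^ 2 := by
  have hpi : (0:ℝ) < π := Real.pi_pos
  refine ⟨32/π + 8*(2*π*C₁)^4, by positivity, ?_⟩
  intro M hM a
  set P := Finset.Ico M (2*M) with hP
  have hPcard : P.card = M := by rw [hP, Nat.card_Ico]; omega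
  set A2 := ∑ n ∈ P, ‖a n‖^2 with hA2
  set T := ∑ n ∈ P, ‖a n‖ with hT
  have hT0 : 0 ≤ T := Finset.sum_nonneg fun n _ => norm_nonneg _
  have hA20 : 0 ≤ A2 := Finset.sum_nonneg fun n _ => sq_nonneg _
  set δ : ℝ := 2*π*C₁/M * T with hδ
  have hMR : (1:ℝ) ≤ (M:ℝ) := by exact_mod_cast hM
  have hM0 : (0:ℝ) < (M:ℝ) := by linarith
  have hδ0 : 0 ≤ δ := by
    rw [hδ]
    exact mul_nonneg (by positivity) hT0
  -- pointwise comparison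
  have hSG : ∀ r ∈ Set.Icc (0:ℝ) 1,
      ‖(∑ n ∈ P, a n * Complex.exp (((2*π*z n*r : ℝ):ℂ) * Complex.I))
        - ∑ n ∈ P, a n * Complex.exp (((2*π*(π*((n:ℝ)-1/4))*r : ℝ):ℂ) * Complex.I)‖ ≤ δ := by
    intro r hr
    obtain ⟨hr0, hr1⟩ := hr
    rw [← Finset.sum_sub_distrib]
    refine (norm_sum_le _ _).trans ?_
    have hterm : ∀ n ∈ P,
        ‖a n * Complex.exp (((2*π*z n*r : ℝ):ℂ) * Complex.I)
          - a n * Complex.exp (((2*π*(π*((n:ℝ)-1/4))*r : ℝ):ℂ) * Complex.I)‖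
          ≤ ‖a n‖ * (2*π*C₁/M) := by
      intro n hn
      rw [← mul_sub, norm_mul]
      refine mul_le_mul_of_nonneg_left ?_ (norm_nonneg _)
      refine (norm_exp_sub_exp_le _ _).trans ?_
      have hnMem : M ≤ n ∧ n < 2*M := Finset.mem_Ico.1 (by rwa [hP] at hn)
      have hn1 : 1 ≤ n := le_trans hM hnMem.1
      have hnR : (M:ℝ) ≤ (n:ℝ) := by exact_mod_cast hnMem.1
      have hnR0 : (0:ℝ) < (n:ℝ) := by
        have : (1:ℝ) ≤ (n:ℝ) := by exact_mod_cast hn1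
        linarith
      have hzn := hz n hn1
      have habs : |2*π*z n*r - 2*π*(π*((n:ℝ)-1/4))*r|
          = (2*π*r) * |z n - π*((n:ℝ)-1/4)| := by
        rw [show 2*π*z n*r - 2*π*(π*((n:ℝ)-1/4))*r
            = (2*π*r) * (z n - π*((n:ℝ)-1/4)) by ring, abs_mul,
          abs_of_nonneg (by positivity : (0:ℝ) ≤ 2*π*r)]
      rw [habs]
      calc (2*π*r) * |z n - π*((n:ℝ)-1/4)| ≤ (2*π*1) * (C₁/n) := by
            apply mul_le_mul (by nlinarith) hzn (abs_nonneg _) (by positivity)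
        _ ≤ 2*π*C₁/M := by
            rw [mul_one, show 2*π*(C₁/(n:ℝ)) = (2*π*C₁)/(n:ℝ) by ring]
            gcongr
    refine (Finset.sum_le_sum hterm).trans ?_
    rw [← Finset.sum_mul, ← hT, hδ]
    ring_nf
    exact le_refl _
  -- pointwise fourth-power bound
  have hS4 : ∀ r ∈ Set.Icc (0:ℝ) 1,
      ‖∑ n ∈ P, a n * Complex.exp (((2*π*z n*r : ℝ):ℂ) * Complex.I)‖^4
        ≤ 8*‖∑ n ∈ P, a n * Complex.exp (((2*π*(π*((n:ℝ)-1/4))*r : ℝ):ℂ) * Complex.I)‖^4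
          + 8*δ^4 := by
    intro r hr
    have h := hSG r hr
    have htri : ‖∑ n ∈ P, a n * Complex.exp (((2*π*z n*r : ℝ):ℂ) * Complex.I)‖
        ≤ ‖∑ n ∈ P, a n * Complex.exp (((2*π*(π*((n:ℝ)-1/4))*r : ℝ):ℂ) * Complex.I)‖ + δ := by
      calc ‖∑ n ∈ P, a n * Complex.exp (((2*π*z n*r : ℝ):ℂ) * Complex.I)‖
          = ‖(∑ n ∈ P, a n * Complex.exp (((2*π*(π*((n:ℝ)-1/4))*r : ℝ):ℂ) * Complex.I))
              + ((∑ n ∈ P, a n * Complex.exp (((2*π*z n*r : ℝ):ℂ) * Complex.I))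
                - ∑ n ∈ P, a n * Complex.exp (((2*π*(π*((n:ℝ)-1/4))*r : ℝ):ℂ) * Complex.I))‖ := by
            rw [add_sub_cancel]
        _ ≤ ‖∑ n ∈ P, a n * Complex.exp (((2*π*(π*((n:ℝ)-1/4))*r : ℝ):ℂ) * Complex.I)‖
              + ‖(∑ n ∈ P, a n * Complex.exp (((2*π*z n*r : ℝ):ℂ) * Complex.I))
                - ∑ n ∈ P, a n * Complex.exp (((2*π*(π*((n:ℝ)-1/4))*r : ℝ):ℂ) * Complex.I)‖ :=
            norm_add_le _ _
        _ ≤ _ := by linarith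
    exact quad_bound _ _ _ (norm_nonneg _) (norm_nonneg _) hδ0 htri
  -- continuity
  have hScont : Continuous (fun r : ℝ =>
      ∑ n ∈ P, a n * Complex.exp (((2*π*z n*r : ℝ):ℂ) * Complex.I)) := by
    apply continuous_finset_sum
    intro n _
    apply continuous_const.mul
    apply Complex.continuous_exp.comp
    apply Continuous.mul _ continuous_const
    exact Complex.continuous_ofReal.comp (continuous_const.mul continuous_id)
  have hGcont : Continuous (fun r : ℝ =>
      ∑ n ∈ P, a n * Complex.exp (((2*π*(π*((n:ℝ)-1/4))*r : ℝ):ℂ) * Complex.I)) := by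
    apply continuous_finset_sum
    intro n _
    apply continuous_const.mul
    apply Complex.continuous_exp.comp
    apply Continuous.mul _ continuous_const
    exact Complex.continuous_ofReal.comp (continuous_const.mul continuous_id)
  have hint1 : IntervalIntegrable (fun r : ℝ =>
      ‖∑ n ∈ P, a n * Complex.exp (((2*π*z n*r : ℝ):ℂ) * Complex.I)‖^4)
      MeasureTheory.volume 0 1 := ((hScont.norm.pow 4)).intervalIntegrable _ _
  have hint2 : IntervalIntegrable (fun r : ℝ =>
      8*‖∑ n ∈ P, a n * Complex.exp (((2*π*(π*((n:ℝ)-1/4))*r : ℝ):ℂ) * Complex.I)‖^4 + 8*δ^4)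
      MeasureTheory.volume 0 1 :=
    ((continuous_const.mul (hGcont.norm.pow 4)).add continuous_const).intervalIntegrable _ _
  have hmono := intervalIntegral.integral_mono_on (by norm_num : (0:ℝ) ≤ 1) hint1 hint2 hS4
  have hrhs : (∫ r in (0:ℝ)..1,
      (8*‖∑ n ∈ P, a n * Complex.exp (((2*π*(π*((n:ℝ)-1/4))*r : ℝ):ℂ) * Complex.I)‖^4 + 8*δ^4))
      = 8*(∫ r in (0:ℝ)..1,
          ‖∑ n ∈ P, a n * Complex.exp (((2*π*(π*((n:ℝ)-1/4))*r : ℝ):ℂ) * Complex.I)‖^4)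
        + 8*δ^4 := by
    rw [intervalIntegral.integral_add
      (f := fun r => 8*‖∑ n ∈ P, a n * Complex.exp (((2*π*(π*((n:ℝ)-1/4))*r : ℝ):ℂ) * Complex.I)‖^4)
      ((continuous_const.mul (hGcont.norm.pow 4)).intervalIntegrable _ _)
      (intervalIntegrable_const),
      intervalIntegral.integral_const_mul, intervalIntegral.integral_const]
    simp
  have hG4 : (∫ r in (0:ℝ)..1,
      ‖∑ n ∈ P, a n * Complex.exp (((2*π*(π*((n:ℝ)-1/4))*r : ℝ):ℂ) * Complex.I)‖^4)
      ≤ (4/π) * M * A2^2 := L4_int_G M hM a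
  -- δ⁴ bound
  have hT2 : T^2 ≤ (M:ℝ) * A2 := by
    have h := sq_sum_le_card_mul_sum_sq (s := P) (f := fun n => ‖a n‖)
    rw [hPcard] at h
    exact h
  have hδ4 : δ^4 ≤ (2*π*C₁)^4 * M * A2^2 := by
    have h1 : δ^4 = (2*π*C₁)^4 * (T^2)^2 / (M:ℝ)^4 := by
      rw [hδ]
      field_simp
    have h2 : (T^2)^2 ≤ ((M:ℝ)*A2)^2 := pow_le_pow_left₀ (sq_nonneg T) hT2 2
    have hM3 : (1:ℝ) ≤ (M:ℝ)^3 := one_le_pow₀ hMR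
    calc δ^4 = (2*π*C₁)^4 * (T^2)^2 / (M:ℝ)^4 := h1
      _ ≤ (2*π*C₁)^4 * ((M:ℝ)*A2)^2 / (M:ℝ)^4 := by gcongr
      _ = (2*π*C₁)^4 * A2^2 / (M:ℝ)^2 := by
          field_simp
      _ ≤ (2*π*C₁)^4 * M * A2^2 := by
          rw [div_le_iff₀ (by positivity)]
          have hX : (0:ℝ) ≤ (2*π*C₁)^4 * A2^2 := by positivity
          calc (2*π*C₁)^4 * A2^2 = ((2*π*C₁)^4 * A2^2) * 1 := by ring
            _ ≤ ((2*π*C₁)^4 * A2^2) * (M:ℝ)^3 := by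
                exact mul_le_mul_of_nonneg_left hM3 hX
            _ = (2*π*C₁)^4 * ↑M * A2^2 * ↑M^2 := by ring
  calc (∫ r in (0:ℝ)..1,
      ‖∑ n ∈ P, a n * Complex.exp (((2*π*z n*r : ℝ):ℂ) * Complex.I)‖^4)
      ≤ 8*(∫ r in (0:ℝ)..1,
          ‖∑ n ∈ P, a n * Complex.exp (((2*π*(π*((n:ℝ)-1/4))*r : ℝ):ℂ) * Complex.I)‖^4)
        + 8*δ^4 := by rw [← hrhs]; exact hmono
    _ ≤ 8*((4/π) * M * A2^2) + 8*((2*π*C₁)^4 * M * A2^2) := by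
        have h8 : (0:ℝ) ≤ 8 := by norm_num
        have := mul_le_mul_of_nonneg_left hG4 h8
        have := mul_le_mul_of_nonneg_left hδ4 h8
        linarith
    _ = (32/π + 8*(2*π*C₁)^4) * M * A2^2 := by ring
end
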